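/- Let G be a graph containing a path u–v–w where u, v, w all have degree 2, with u adjacent to a vertex x and w adjacent to a vertex y (x, y ∉ {u,v,w}). Let L be a list assignment with |L(z)| = d(z) + 2 for every vertex z, and let φ be a proper conflict-free L-coloring of G − {u,v,w}. If x = y, or if some vertex among x, y has at least two colors each appearing exactly once in its neighborhood in G − {u,v,w}, or if the lists L(u), L(v), L(w) do not all have size 4 with the specific structure L(u) = {φ(x), α, ξ₁, ξ₂}, L(v) = {φ(x), φ(y), ξ₁, ξ₂}, L(w) = {φ(y), β, ξ₁, ξ₂} where {α} and {β} are the unique once-appearing colors in the neighborhoods of x and y respectively, then φ extends to a proper conflict-free L-coloring of G. -/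

import Mathlib

/-- A proper conflict-free coloring of `G`. -/
def IsPCF {V β : Type*} (G : SimpleGraph V) (φ : V → β) : Prop :=
  (∀ ⦃a b : V⦄, G.Adj a b → φ a ≠ φ b) ∧
  ∀ v : V, (∃ u, G.Adj v u) → ∃ c : β, ∃! u : V, G.Adj v u ∧ φ u = c

/-- A proper conflict-free coloring from the lists `L`. -/
def IsPCFList {V : Type*} (G : SimpleGraph V) (L : V → Finset ℕ) (φ : V → ℕ) : Prop :=
  (∀ v, φ v ∈ L v) ∧ IsPCF G φ

/-- The graph obtained from `G` by deleting the vertices in `S`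
(kept on the same vertex type; deleted vertices become isolated). -/
def delVerts {V : Type*} (G : SimpleGraph V) (S : Set V) : SimpleGraph V where
  Adj a b := G.Adj a b ∧ a ∉ S ∧ b ∉ S
  symm := by
    constructor
    intro a b h
    exact ⟨h.1.symm, h.2.2, h.2.1⟩
  loopless := by
    constructor
    intro a h
    exact G.loopless.irrefl a h.1

/-- `Uset G φ v` is the set of colors appearing exactly once in the open
neighborhood of `v` in `G` under the coloring `φ`. -/
def Uset {V : Type*} (G : SimpleGraph V) (φ : V → ℕ) (v : V) : Set ℕ :=
  {c | ∃! u : V, G.Adj v u ∧ φ u = c}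


lemma nbhd_char {V : Type*} [Fintype V] [DecidableEq V] (G : SimpleGraph V)
    [DecidableRel G.Adj] (u v x : V)
    (huv : G.Adj u v) (hux : G.Adj u x) (hvx : v ≠ x)
    (hdu : G.degree u = 2) :
    ∀ z, G.Adj u z ↔ z = v ∨ z = x := by
  have hsub : ({v, x} : Finset V) ⊆ G.neighborFinset u := by
    intro z hz
    simp only [Finset.mem_insert, Finset.mem_singleton] at hz
    rcases hz with rfl | rfl
    · exact (SimpleGraph.mem_neighborFinset G u z).mpr huv
    · exact (SimpleGraph.mem_neighborFinset G u z).mpr hux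
  have hcard : (G.neighborFinset u).card = 2 := by
    rw [SimpleGraph.card_neighborFinset_eq_degree]; exact hdu
  have heq : ({v, x} : Finset V) = G.neighborFinset u := by
    apply Finset.eq_of_subset_of_card_le hsub
    rw [hcard, Finset.card_insert_of_notMem (by simp [hvx]), Finset.card_singleton]
  intro z
  rw [← SimpleGraph.mem_neighborFinset, ← heq]
  simp

section Glue
variable {V : Type*} [DecidableEq V] (G : SimpleGraph V) (u v w x y : V)
  (L : V → Finset ℕ) (φ : V → ℕ) (a b c : ℕ)

lemma glue
    (hNu : ∀ z, G.Adj u z ↔ z = v ∨ z = x)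
    (hNv : ∀ z, G.Adj v z ↔ z = u ∨ z = w)
    (hNw : ∀ z, G.Adj w z ↔ z = v ∨ z = y)
    (hxS : x ∉ ({u, v, w} : Set V)) (hyS : y ∉ ({u, v, w} : Set V))
    (huv : u ≠ v) (hvw : v ≠ w) (huw : u ≠ w)
    (hφ : IsPCF (delVerts G {u, v, w}) φ)
    (hφL : ∀ z, z ∉ ({u, v, w} : Set V) → φ z ∈ L z)
    (ha : a ∈ L u) (hb : b ∈ L v) (hc : c ∈ L w)
    (hab : a ≠ b) (hbc : b ≠ c) (hac : a ≠ c)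
    (hacx : a ≠ φ x) (hbcx : b ≠ φ x) (hbcy : b ≠ φ y) (hccy : c ≠ φ y)
    (Hx : x ≠ y → (∀ t, (delVerts G {u, v, w}).Adj x t → φ t ≠ a) ∨
        (∃ α ∈ Uset (delVerts G {u, v, w}) φ x, α ≠ a))
    (Hy : x ≠ y → (∀ t, (delVerts G {u, v, w}).Adj y t → φ t ≠ c) ∨
        (∃ β ∈ Uset (delVerts G {u, v, w}) φ y, β ≠ c))
    (Hxy : x = y → (∀ t, (delVerts G {u, v, w}).Adj x t → φ t ≠ a) ∨
        (∀ t, (delVerts G {u, v, w}).Adj x t → φ t ≠ c) ∨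
        (∃ α ∈ Uset (delVerts G {u, v, w}) φ x, α ≠ a ∧ α ≠ c)) :
    ∃ ψ : V → ℕ, (∀ z, z ∉ ({u, v, w} : Set V) → ψ z = φ z) ∧ IsPCFList G L ψ := by
  classical
  set G' := delVerts G {u, v, w} with hG'
  have hxu : x ≠ u := fun e => hxS (by simp [e])
  have hxv : x ≠ v := fun e => hxS (by simp [e])
  have hxw : x ≠ w := fun e => hxS (by simp [e])
  have hyu : y ≠ u := fun e => hyS (by simp [e])
  have hyv : y ≠ v := fun e => hyS (by simp [e])
  have hyw : y ≠ w := fun e => hyS (by simp [e])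
  set ψ : V → ℕ := fun z => if z = u then a else if z = v then b else if z = w then c else φ z
    with hψdef
  have hψu : ψ u = a := by simp [hψdef]
  have hψv : ψ v = b := by simp [hψdef, Ne.symm huv]
  have hψw : ψ w = c := by simp [hψdef, Ne.symm huw, Ne.symm hvw]
  have hψo : ∀ z, z ∉ ({u, v, w} : Set V) → ψ z = φ z := by
    intro z hz
    simp only [Set.mem_insert_iff, Set.mem_singleton_iff, not_or] at hz
    simp [hψdef, hz.1, hz.2.1, hz.2.2]
  have hψx : ψ x = φ x := hψo x hxS
  have hψy : ψ y = φ y := hψo y hyS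
  -- adjacency from G' to G
  have hG'G : ∀ p q, G'.Adj p q → G.Adj p q := fun p q h => h.1
  have hG'S : ∀ p q, G'.Adj p q → q ∉ ({u, v, w} : Set V) := fun p q h => h.2.2
  refine ⟨ψ, hψo, ?_, ?_, ?_⟩
  · -- list membership
    intro z
    by_cases hz : z ∈ ({u, v, w} : Set V)
    · rcases hz with rfl | rfl | rfl
      · rwa [hψu]
      · rwa [hψv]
      · rwa [hψw]
    · rw [hψo z hz]; exact hφL z hz
  · -- properness
    intro p q hadj
    by_cases hp : p = u
    · subst hp
      rcases (hNu q).mp hadj with rfl | rfl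
      · rw [hψu, hψv]; exact hab
      · rw [hψu, hψx]; exact hacx
    · by_cases hp2 : p = v
      · subst hp2
        rcases (hNv q).mp hadj with rfl | rfl
        · rw [hψv, hψu]; exact fun e => hab e.symm
        · rw [hψv, hψw]; exact hbc
      · by_cases hp3 : p = w
        · subst hp3
          rcases (hNw q).mp hadj with rfl | rfl
          · rw [hψw, hψv]; exact fun e => hbc e.symm
          · rw [hψw, hψy]; exact hccy
        · have hpS : p ∉ ({u, v, w} : Set V) := by simp [hp, hp2, hp3]
          by_cases hq : q = u
          · subst hq
            rcases (hNu p).mp hadj.symm with rfl | rfl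
            · exact absurd rfl hp2
            · rw [hψx, hψu]; exact fun e => hacx e.symm
          · by_cases hq2 : q = v
            · subst hq2
              rcases (hNv p).mp hadj.symm with rfl | rfl
              · exact absurd rfl hp
              · exact absurd rfl hp3
            · by_cases hq3 : q = w
              · subst hq3
                rcases (hNw p).mp hadj.symm with rfl | rfl
                · exact absurd rfl hp2
                · rw [hψy, hψw]; exact fun e => hccy e.symm
              · have hqS : q ∉ ({u, v, w} : Set V) := by simp [hq, hq2, hq3]
                rw [hψo p hpS, hψo q hqS]
                exact hφ.1 ⟨hadj, hpS, hqS⟩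
  · -- conflict-freeness
    intro z hz
    by_cases hzu : z = u
    · subst hzu
      refine ⟨b, v, ⟨(hNu v).mpr (Or.inl rfl), hψv⟩, ?_⟩
      rintro t ⟨hadj, ht⟩
      rcases (hNu t).mp hadj with rfl | rfl
      · rfl
      · rw [hψx] at ht; exact absurd ht.symm hbcx
    · by_cases hzv : z = v
      · subst hzv
        refine ⟨a, u, ⟨(hNv u).mpr (Or.inl rfl), hψu⟩, ?_⟩
        rintro t ⟨hadj, ht⟩
        rcases (hNv t).mp hadj with rfl | rfl
        · rfl
        · rw [hψw] at ht; exact absurd ht.symm hac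
      · by_cases hzw : z = w
        · subst hzw
          refine ⟨b, v, ⟨(hNw v).mpr (Or.inl rfl), hψv⟩, ?_⟩
          rintro t ⟨hadj, ht⟩
          rcases (hNw t).mp hadj with rfl | rfl
          · rfl
          · rw [hψy] at ht; exact absurd ht.symm hbcy
        · have hzS : z ∉ ({u, v, w} : Set V) := by simp [hzu, hzv, hzw]
          by_cases hzx : z = x
          · subst hzx
            by_cases hxy : z = y
            · -- z = z = y
              have hAxy : ∀ t, G.Adj z t ↔ (t = u ∨ t = w ∨ G'.Adj z t) := by
                intro t
                constructor
                · intro hadj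
                  by_cases htu : t = u
                  · exact Or.inl htu
                  · by_cases htv : t = v
                    · subst htv
                      rcases (hNv z).mp hadj.symm with rfl | rfl
                      · exact absurd rfl hxu
                      · exact absurd rfl hxw
                    · by_cases htw : t = w
                      · exact Or.inr (Or.inl htw)
                      · exact Or.inr (Or.inr ⟨hadj, hzS, by simp [htu, htv, htw]⟩)
                · rintro (rfl | rfl | hadj)
                  · exact ((hNu z).mpr (Or.inr rfl)).symm
                  · exact ((hNw z).mpr (Or.inr hxy)).symm
                  · exact hadj.1
              rcases Hxy hxy with h | h | ⟨α, hαU, hαa, hαc⟩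
              · refine ⟨a, u, ⟨(hAxy u).mpr (Or.inl rfl), hψu⟩, ?_⟩
                rintro t ⟨hadj, ht⟩
                rcases (hAxy t).mp hadj with rfl | rfl | hadj'
                · rfl
                · rw [hψw] at ht; exact absurd ht hac.symm
                · rw [hψo t (hG'S _ _ hadj')] at ht
                  exact absurd ht (h t hadj')
              · refine ⟨c, w, ⟨(hAxy w).mpr (Or.inr (Or.inl rfl)), hψw⟩, ?_⟩
                rintro t ⟨hadj, ht⟩
                rcases (hAxy t).mp hadj with rfl | rfl | hadj'
                · rw [hψu] at ht; exact absurd ht hac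
                · rfl
                · rw [hψo t (hG'S _ _ hadj')] at ht
                  exact absurd ht (h t hadj')
              · obtain ⟨t0, ⟨ht0a, ht0c⟩, ht0u⟩ := hαU
                refine ⟨α, t0, ⟨(hAxy t0).mpr (Or.inr (Or.inr ht0a)), by
                  rw [hψo t0 (hG'S _ _ ht0a)]; exact ht0c⟩, ?_⟩
                rintro t ⟨hadj, ht⟩
                rcases (hAxy t).mp hadj with rfl | rfl | hadj'
                · rw [hψu] at ht; exact absurd ht hαa.symm
                · rw [hψw] at ht; exact absurd ht hαc.symm
                · rw [hψo t (hG'S _ _ hadj')] at ht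
                  exact ht0u t ⟨hadj', ht⟩
            · -- z = z ≠ y
              have hAx : ∀ t, G.Adj z t ↔ (t = u ∨ G'.Adj z t) := by
                intro t
                constructor
                · intro hadj
                  by_cases htu : t = u
                  · exact Or.inl htu
                  · by_cases htv : t = v
                    · subst htv
                      rcases (hNv z).mp hadj.symm with rfl | rfl
                      · exact absurd rfl hxu
                      · exact absurd rfl hxw
                    · by_cases htw : t = w
                      · subst htw
                        rcases (hNw z).mp hadj.symm with rfl | rfl
                        · exact absurd rfl hxv
                        · exact absurd rfl hxy
                      · exact Or.inr ⟨hadj, hzS, by simp [htu, htv, htw]⟩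
                · rintro (rfl | hadj)
                  · exact ((hNu z).mpr (Or.inr rfl)).symm
                  · exact hadj.1
              rcases Hx hxy with h | ⟨α, hαU, hαa⟩
              · refine ⟨a, u, ⟨(hAx u).mpr (Or.inl rfl), hψu⟩, ?_⟩
                rintro t ⟨hadj, ht⟩
                rcases (hAx t).mp hadj with rfl | hadj'
                · rfl
                · rw [hψo t (hG'S _ _ hadj')] at ht
                  exact absurd ht (h t hadj')
              · obtain ⟨t0, ⟨ht0a, ht0c⟩, ht0u⟩ := hαU
                refine ⟨α, t0, ⟨(hAx t0).mpr (Or.inr ht0a), by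
                  rw [hψo t0 (hG'S _ _ ht0a)]; exact ht0c⟩, ?_⟩
                rintro t ⟨hadj, ht⟩
                rcases (hAx t).mp hadj with rfl | hadj'
                · rw [hψu] at ht; exact absurd ht hαa.symm
                · rw [hψo t (hG'S _ _ hadj')] at ht
                  exact ht0u t ⟨hadj', ht⟩
          · by_cases hzy : z = y
            · subst hzy
              have hxy : x ≠ z := fun e => hzx e.symm
              have hAy : ∀ t, G.Adj z t ↔ (t = w ∨ G'.Adj z t) := by
                intro t
                constructor
                · intro hadj
                  by_cases htw : t = w
                  · exact Or.inl htw
                  · by_cases htv : t = v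
                    · subst htv
                      rcases (hNv z).mp hadj.symm with rfl | rfl
                      · exact absurd rfl hyu
                      · exact absurd rfl hyw
                    · by_cases htu : t = u
                      · subst htu
                        rcases (hNu z).mp hadj.symm with rfl | rfl
                        · exact absurd rfl hyv
                        · exact absurd rfl (fun e => hxy e.symm)
                      · exact Or.inr ⟨hadj, hzS, by simp [htu, htv, htw]⟩
                · rintro (rfl | hadj)
                  · exact ((hNw z).mpr (Or.inr rfl)).symm
                  · exact hadj.1
              rcases Hy hxy with h | ⟨β, hβU, hβc⟩
              · refine ⟨c, w, ⟨(hAy w).mpr (Or.inl rfl), hψw⟩, ?_⟩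
                rintro t ⟨hadj, ht⟩
                rcases (hAy t).mp hadj with rfl | hadj'
                · rfl
                · rw [hψo t (hG'S _ _ hadj')] at ht
                  exact absurd ht (h t hadj')
              · obtain ⟨t0, ⟨ht0a, ht0c⟩, ht0u⟩ := hβU
                refine ⟨β, t0, ⟨(hAy t0).mpr (Or.inr ht0a), by
                  rw [hψo t0 (hG'S _ _ ht0a)]; exact ht0c⟩, ?_⟩
                rintro t ⟨hadj, ht⟩
                rcases (hAy t).mp hadj with rfl | hadj'
                · rw [hψw] at ht; exact absurd ht hβc.symm
                · rw [hψo t (hG'S _ _ hadj')] at ht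
                  exact ht0u t ⟨hadj', ht⟩
            · -- z outside everything
              have hAz : ∀ t, G.Adj z t ↔ G'.Adj z t := by
                intro t
                constructor
                · intro hadj
                  have htS : t ∉ ({u, v, w} : Set V) := by
                    rintro (rfl | rfl | rfl)
                    · rcases (hNu z).mp hadj.symm with rfl | rfl
                      · exact hzv rfl
                      · exact hzx rfl
                    · rcases (hNv z).mp hadj.symm with rfl | rfl
                      · exact hzu rfl
                      · exact hzw rfl
                    · rcases (hNw z).mp hadj.symm with rfl | rfl
                      · exact hzv rfl
                      · exact hzy rfl
                  exact ⟨hadj, hzS, htS⟩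
                · exact fun h => h.1
              obtain ⟨t1, ht1⟩ := hz
              obtain ⟨c0, t0, ⟨ht0a, ht0c⟩, ht0u⟩ := hφ.2 z ⟨t1, (hAz t1).mp ht1⟩
              refine ⟨c0, t0, ⟨(hAz t0).mpr ht0a, by
                rw [hψo t0 (hG'S _ _ ht0a)]; exact ht0c⟩, ?_⟩
              rintro t ⟨hadj, ht⟩
              have hadj' := (hAz t).mp hadj
              rw [hψo t (hG'S _ _ hadj')] at ht
              exact ht0u t ⟨hadj', ht⟩
end Glue

lemma cle3 (a b c : ℕ) : ({a,b,c} : Finset ℕ).card ≤ 3 :=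
  (Finset.card_insert_le _ _).trans (Nat.succ_le_succ ((Finset.card_insert_le _ _).trans (by simp)))

lemma four_ne {a b c d : ℕ} (h : ({a,b,c,d} : Finset ℕ).card = 4) :
    a ≠ b ∧ a ≠ c ∧ a ≠ d ∧ b ≠ c ∧ b ≠ d ∧ c ≠ d := by
  refine ⟨fun e => ?_, fun e => ?_, fun e => ?_, fun e => ?_, fun e => ?_, fun e => ?_⟩ <;>
    subst e <;>
    [ (have := cle3 a c d; rw [show ({a,a,c,d} : Finset ℕ) = {a,c,d} by ext z; simp] at h);
      (have := cle3 a b d; rw [show ({a,b,a,d} : Finset ℕ) = {a,b,d} by ext z; simp; tauto] at h);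
      (have := cle3 a b c; rw [show ({a,b,c,a} : Finset ℕ) = {a,b,c} by ext z; simp; tauto] at h);
      (have := cle3 a b d; rw [show ({a,b,b,d} : Finset ℕ) = {a,b,d} by ext z; simp] at h);
      (have := cle3 a b c; rw [show ({a,b,c,b} : Finset ℕ) = {a,b,c} by ext z; simp; tauto] at h);
      (have := cle3 a b c; rw [show ({a,b,c,c} : Finset ℕ) = {a,b,c} by ext z; simp] at h)] <;>
    omega

lemma cle4 (a b c d : ℕ) : ({a,b,c,d} : Finset ℕ).card ≤ 4 :=
  (Finset.card_insert_le _ _).trans (Nat.succ_le_succ (cle3 b c d))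

lemma cle2 (a b : ℕ) : ({a,b} : Finset ℕ).card ≤ 2 :=
  (Finset.card_insert_le _ _).trans (by simp)

lemma sd3_nonempty {s : Finset ℕ} (h : s.card = 4) (p q r : ℕ) : (s \ {p,q,r}).Nonempty := by
  rw [← Finset.card_pos]
  have h1 := Finset.le_card_sdiff ({p,q,r} : Finset ℕ) s
  have h2 := cle3 p q r
  omega

lemma sd2_two {s : Finset ℕ} (h : s.card = 4) (p q : ℕ) :
    ∃ a ∈ s \ {p,q}, ∃ b ∈ s \ {p,q}, a ≠ b := by
  apply Finset.one_lt_card.mp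
  have h1 := Finset.le_card_sdiff ({p,q} : Finset ℕ) s
  have h2 := cle2 p q
  omega

lemma sd1_three {s : Finset ℕ} (h : s.card = 4) (p : ℕ) :
    ∃ b1 b2 b3 : ℕ, b1 ≠ b2 ∧ b1 ≠ b3 ∧ b2 ≠ b3 ∧
      b1 ∈ s \ {p} ∧ b2 ∈ s \ {p} ∧ b3 ∈ s \ {p} := by
  have h3 : 3 ≤ (s \ {p}).card := by
    have h1 := Finset.le_card_sdiff ({p} : Finset ℕ) s
    simp only [Finset.card_singleton] at h1
    omega
  obtain ⟨T, hT, hT3⟩ := Finset.exists_subset_card_eq h3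
  obtain ⟨b1, b2, b3, h12, h13, h23, rfl⟩ := Finset.card_eq_three.mp hT3
  exact ⟨b1, b2, b3, h12, h13, h23, hT (by simp), hT (by simp), hT (by simp)⟩

set_option maxHeartbeats 1000000 in
/-- Extension lemma for a path `u–v–w` of degree-2 vertices with outer neighbors
`x` of `u` and `y` of `w`: a PCF coloring of `G - {u,v,w}` extends to `G` unless
`x ≠ y` and the lists have the specific exceptional structure. -/
theorem stmt8 {V : Type*} [Fintype V] [DecidableEq V] (G : SimpleGraph V)
    [DecidableRel G.Adj] (u v w x y : V) (L : V → Finset ℕ) (φ : V → ℕ)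
    (huv : G.Adj u v) (hvw : G.Adj v w) (hux : G.Adj u x) (hwy : G.Adj w y)
    (huw : u ≠ w) (hxv : x ≠ v) (hyv : y ≠ v)
    (hxS : x ∉ ({u, v, w} : Set V)) (hyS : y ∉ ({u, v, w} : Set V))
    (hdu : G.degree u = 2) (hdv : G.degree v = 2) (hdw : G.degree w = 2)
    (hL : ∀ z, (L z).card = G.degree z + 2)
    (hφ : IsPCF (delVerts G {u, v, w}) φ)
    (hφL : ∀ z, z ∉ ({u, v, w} : Set V) → φ z ∈ L z)
    (hcase :
      x = y ∨
      (∃ a b : ℕ, a ≠ b ∧ a ∈ Uset (delVerts G {u, v, w}) φ x ∧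
        b ∈ Uset (delVerts G {u, v, w}) φ x) ∨
      (∃ a b : ℕ, a ≠ b ∧ a ∈ Uset (delVerts G {u, v, w}) φ y ∧
        b ∈ Uset (delVerts G {u, v, w}) φ y) ∨
      ¬ (∃ α β ξ₁ ξ₂ : ℕ,
          Uset (delVerts G {u, v, w}) φ x = {α} ∧
          Uset (delVerts G {u, v, w}) φ y = {β} ∧
          L u = {φ x, α, ξ₁, ξ₂} ∧
          L v = {φ x, φ y, ξ₁, ξ₂} ∧
          L w = {φ y, β, ξ₁, ξ₂})) :
    ∃ ψ : V → ℕ, (∀ z, z ∉ ({u, v, w} : Set V) → ψ z = φ z) ∧ IsPCFList G L ψ := by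
  classical
  set G' := delVerts G {u, v, w} with hG'def
  have huv' : u ≠ v := G.ne_of_adj huv
  have hvw' : v ≠ w := G.ne_of_adj hvw
  have hxu : x ≠ u := fun e => hxS (by simp [e])
  have hxw : x ≠ w := fun e => hxS (by simp [e])
  have hyu : y ≠ u := fun e => hyS (by simp [e])
  have hyw : y ≠ w := fun e => hyS (by simp [e])
  have hNu : ∀ z, G.Adj u z ↔ z = v ∨ z = x :=
    nbhd_char G u v x huv hux (Ne.symm hxv) hdu
  have hNv : ∀ z, G.Adj v z ↔ z = u ∨ z = w :=
    nbhd_char G v u w huv.symm hvw huw hdv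
  have hNw : ∀ z, G.Adj w z ↔ z = v ∨ z = y :=
    nbhd_char G w v y hvw.symm hwy (Ne.symm hyv) hdw
  have hLu4 : (L u).card = 4 := by rw [hL u, hdu]
  have hLv4 : (L v).card = 4 := by rw [hL v, hdv]
  have hLw4 : (L w).card = 4 := by rw [hL w, hdw]
  -- abbreviation for applying glue
  have hglue := glue G u v w x y L φ
  by_cases hxy : x = y
  · -- CASE x = y
    subst hxy
    -- choose a guard color α for x
    obtain ⟨α, hαmem⟩ : ∃ α, ∀ _ : (Uset G' φ x).Nonempty, α ∈ Uset G' φ x := by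
      by_cases hU : (Uset G' φ x).Nonempty
      · obtain ⟨α, hα⟩ := hU; exact ⟨α, fun _ => hα⟩
      · exact ⟨0, fun h => absurd h hU⟩
    have hHxy : ∀ a c : ℕ, a ≠ α → c ≠ α →
        ((∀ t, G'.Adj x t → φ t ≠ a) ∨ (∀ t, G'.Adj x t → φ t ≠ c) ∨
         (∃ α' ∈ Uset G' φ x, α' ≠ a ∧ α' ≠ c)) := by
      intro a c haα hcα
      by_cases hU : (Uset G' φ x).Nonempty
      · exact Or.inr (Or.inr ⟨α, hαmem hU, Ne.symm haα, Ne.symm hcα⟩)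
      · refine Or.inl fun t hadj hft => hU ?_
        obtain ⟨c0, hc0⟩ := hφ.2 x ⟨t, hadj⟩
        exact ⟨c0, hc0⟩
    have main : ∀ b ∈ L v, b ≠ φ x → ∀ a ∈ L u \ {φ x, b, α},
        ∀ c' ∈ L w \ {φ x, b, a, α},
        ∃ ψ : V → ℕ, (∀ z, z ∉ ({u, v, w} : Set V) → ψ z = φ z) ∧ IsPCFList G L ψ := by
      intro b hbv hbne a hamem c' hcmem
      simp only [Finset.mem_sdiff, Finset.mem_insert, Finset.mem_singleton, not_or] at hamem hcmem
      obtain ⟨haLu, hane1, hane2, hane3⟩ := hamem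
      obtain ⟨hcLw, hcne1, hcne2, hcne3, hcne4⟩ := hcmem
      exact hglue a b c' hNu hNv hNw hxS hxS huv' hvw' huw hφ hφL
        haLu hbv hcLw hane2 (fun e => hcne2 e.symm) (fun e => hcne3 e.symm)
        hane1 hbne hbne hcne1
        (fun h => absurd rfl h) (fun h => absurd rfl h)
        (fun _ => hHxy a c' hane3 hcne4)
    obtain ⟨b1, b2, b3, h12, h13, h23, hb1, hb2, hb3⟩ := sd1_three hLv4 (φ x)
    simp only [Finset.mem_sdiff, Finset.mem_singleton] at hb1 hb2 hb3
    by_cases hsucc : ∃ b ∈ ({b1, b2, b3} : Finset ℕ), ∃ a ∈ L u \ {φ x, b, α},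
        (L w \ {φ x, b, a, α}).Nonempty
    · obtain ⟨b, hbT, a, ha, c', hc'⟩ := hsucc
      simp only [Finset.mem_insert, Finset.mem_singleton] at hbT
      have hbv : b ∈ L v ∧ b ≠ φ x := by
        rcases hbT with rfl | rfl | rfl
        exacts [⟨hb1.1, hb1.2⟩, ⟨hb2.1, hb2.2⟩, ⟨hb3.1, hb3.2⟩]
      exact main b hbv.1 hbv.2 a ha c' hc'
    · exfalso
      push_neg at hsucc
      have force : ∀ b ∈ ({b1, b2, b3} : Finset ℕ), ∀ a ∈ L u \ {φ x, b, α},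
          L w = {φ x, b, a, α} := by
        intro b hbT a ha
        have hempty := hsucc b hbT a ha
        have hsub : L w ⊆ {φ x, b, a, α} := Finset.sdiff_eq_empty_iff_subset.mp hempty
        exact Finset.eq_of_subset_of_card_le hsub (by rw [hLw4]; exact cle4 _ _ _ _)
      have key : ∀ b ∈ ({b1, b2, b3} : Finset ℕ), b ≠ φ x → b ∈ L w \ {φ x, α} := by
        intro b hbT hbne
        obtain ⟨a, ha⟩ := sd3_nonempty hLu4 (φ x) b α
        have he := force b hbT a ha
        have h4 := four_ne (by rw [← he]; exact hLw4)
        simp only [Finset.mem_sdiff, Finset.mem_insert, Finset.mem_singleton, not_or]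
        refine ⟨by rw [he]; simp, hbne, h4.2.2.2.2.1⟩
      have hsub3 : ({b1, b2, b3} : Finset ℕ) ⊆ L w \ {φ x, α} := by
        intro b hbT
        have hbne : b ≠ φ x := by
          simp only [Finset.mem_insert, Finset.mem_singleton] at hbT
          rcases hbT with rfl | rfl | rfl
          exacts [hb1.2, hb2.2, hb3.2]
        exact key b hbT hbne
      have hcard3 : ({b1, b2, b3} : Finset ℕ).card = 3 := by
        rw [Finset.card_insert_of_notMem (by simp [h12, h13]),
          Finset.card_insert_of_notMem (by simp [h23]), Finset.card_singleton]
      have hxα : (φ x) ≠ α ∧ (φ x) ∈ L w ∧ α ∈ L w := by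
        obtain ⟨a, ha⟩ := sd3_nonempty hLu4 (φ x) b1 α
        have he := force b1 (by simp) a ha
        have h4 := four_ne (by rw [← he]; exact hLw4)
        exact ⟨h4.2.2.1, by rw [he]; simp, by rw [he]; simp⟩
      have hss : ({φ x, α} : Finset ℕ) ⊆ L w := by
        intro z hz
        simp only [Finset.mem_insert, Finset.mem_singleton] at hz
        rcases hz with rfl | rfl
        exacts [hxα.2.1, hxα.2.2]
      have hcard2 : (L w \ {φ x, α}).card = 2 := by
        rw [Finset.card_sdiff_of_subset hss, hLw4,
          Finset.card_insert_of_notMem (by simp [hxα.1]), Finset.card_singleton]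
      have := Finset.card_le_card hsub3
      omega
  · -- CASE x ≠ y
    have guard : ∀ z : V, ∃ g : ℕ, ∀ a' : ℕ, a' ≠ g →
        ((∀ t, G'.Adj z t → φ t ≠ a') ∨ ∃ α ∈ Uset G' φ z, α ≠ a') := by
      intro z
      by_cases hU : (Uset G' φ z).Nonempty
      · obtain ⟨α, hα⟩ := hU
        exact ⟨α, fun a' h => Or.inr ⟨α, hα, Ne.symm h⟩⟩
      · refine ⟨0, fun a' _ => Or.inl fun t hadj hft => hU ?_⟩
        obtain ⟨c0, hc0⟩ := hφ.2 z ⟨t, hadj⟩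
        exact ⟨c0, hc0⟩
    have doneOkX : (∀ a' : ℕ, (∀ t, G'.Adj x t → φ t ≠ a') ∨
        ∃ α ∈ Uset G' φ x, α ≠ a') →
        ∃ ψ : V → ℕ, (∀ z, z ∉ ({u, v, w} : Set V) → ψ z = φ z) ∧ IsPCFList G L ψ := by
      intro hok
      obtain ⟨gy, hgy⟩ := guard y
      obtain ⟨b, hbB⟩ := sd3_nonempty hLv4 (φ x) (φ y) (φ y)
      simp only [Finset.mem_sdiff, Finset.mem_insert, Finset.mem_singleton, not_or] at hbB
      obtain ⟨hbLv, hbx, hby, -⟩ := hbB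
      obtain ⟨c', hc'⟩ := sd3_nonempty hLw4 (φ y) b gy
      simp only [Finset.mem_sdiff, Finset.mem_insert, Finset.mem_singleton, not_or] at hc'
      obtain ⟨hcLw, hcy, hcb, hcg⟩ := hc'
      obtain ⟨a, ha⟩ := sd3_nonempty hLu4 (φ x) b c'
      simp only [Finset.mem_sdiff, Finset.mem_insert, Finset.mem_singleton, not_or] at ha
      obtain ⟨haLu, hax, hab, hac⟩ := ha
      exact hglue a b c' hNu hNv hNw hxS hyS huv' hvw' huw hφ hφL haLu hbLv hcLw
        hab (fun e => hcb e.symm) hac hax hbx hby hcy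
        (fun _ => hok a) (fun _ => hgy c' hcg) (fun e => absurd e hxy)
    have doneOkY : (∀ c'' : ℕ, (∀ t, G'.Adj y t → φ t ≠ c'') ∨
        ∃ β ∈ Uset G' φ y, β ≠ c'') →
        ∃ ψ : V → ℕ, (∀ z, z ∉ ({u, v, w} : Set V) → ψ z = φ z) ∧ IsPCFList G L ψ := by
      intro hok
      obtain ⟨gx, hgx⟩ := guard x
      obtain ⟨b, hbB⟩ := sd3_nonempty hLv4 (φ x) (φ y) (φ y)
      simp only [Finset.mem_sdiff, Finset.mem_insert, Finset.mem_singleton, not_or] at hbB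
      obtain ⟨hbLv, hbx, hby, -⟩ := hbB
      obtain ⟨a, ha⟩ := sd3_nonempty hLu4 (φ x) b gx
      simp only [Finset.mem_sdiff, Finset.mem_insert, Finset.mem_singleton, not_or] at ha
      obtain ⟨haLu, hax, hab, hag⟩ := ha
      obtain ⟨c', hc'⟩ := sd3_nonempty hLw4 (φ y) b a
      simp only [Finset.mem_sdiff, Finset.mem_insert, Finset.mem_singleton, not_or] at hc'
      obtain ⟨hcLw, hcy, hcb, hca⟩ := hc'
      exact hglue a b c' hNu hNv hNw hxS hyS huv' hvw' huw hφ hφL haLu hbLv hcLw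
        hab (fun e => hcb e.symm) (fun e => hca e.symm) hax hbx hby hcy
        (fun _ => hgx a hag) (fun _ => hok c') (fun e => absurd e hxy)
    have twoOk : ∀ z : V, (∃ a1 a2 : ℕ, a1 ≠ a2 ∧ a1 ∈ Uset G' φ z ∧ a2 ∈ Uset G' φ z) →
        ∀ a' : ℕ, (∀ t, G'.Adj z t → φ t ≠ a') ∨ ∃ α ∈ Uset G' φ z, α ≠ a' := by
      rintro z ⟨a1, a2, h12, h1, h2⟩ a'
      rcases eq_or_ne a' a1 with rfl | hne
      · exact Or.inr ⟨a2, h2, fun e => h12 e.symm⟩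
      · exact Or.inr ⟨a1, h1, Ne.symm hne⟩
    have notSing : ∀ z : V, ¬(∃ α, Uset G' φ z = {α}) →
        ∀ a' : ℕ, (∀ t, G'.Adj z t → φ t ≠ a') ∨ ∃ α ∈ Uset G' φ z, α ≠ a' := by
      intro z hns a'
      by_cases hU : (Uset G' φ z).Nonempty
      · obtain ⟨α, hα⟩ := hU
        have hex : ∃ α', α' ∈ Uset G' φ z ∧ α' ≠ α := by
          by_contra hno
          push_neg at hno
          exact hns ⟨α, Set.eq_singleton_iff_unique_mem.mpr ⟨hα, hno⟩⟩
        obtain ⟨α', hα', hne⟩ := hex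
        exact twoOk z ⟨α', α, hne, hα', hα⟩ a'
      · refine Or.inl fun t hadj hft => hU ?_
        obtain ⟨c0, hc0⟩ := hφ.2 z ⟨t, hadj⟩
        exact ⟨c0, hc0⟩
    rcases hcase with e | h2 | h3 | hstr
    · exact absurd e hxy
    · exact doneOkX (twoOk x h2)
    · exact doneOkY (twoOk y h3)
    · by_cases hUx1 : ∃ α, Uset G' φ x = {α}
      swap
      · exact doneOkX (notSing x hUx1)
      by_cases hUy1 : ∃ β, Uset G' φ y = {β}
      swap
      · exact doneOkY (notSing y hUy1)
      obtain ⟨α, hUx⟩ := hUx1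
      obtain ⟨β, hUy⟩ := hUy1
      have hαU : α ∈ Uset G' φ x := by rw [hUx]; rfl
      have hβU : β ∈ Uset G' φ y := by rw [hUy]; rfl
      have main : ∀ b, b ∈ L v → b ≠ φ x → b ≠ φ y → ∀ a ∈ L u \ {φ x, b, α},
          ∀ c' ∈ L w \ {φ y, b, a, β},
          ∃ ψ : V → ℕ, (∀ z, z ∉ ({u, v, w} : Set V) → ψ z = φ z) ∧ IsPCFList G L ψ := by
        intro b hbLv hbx hby a hamem c' hcmem
        simp only [Finset.mem_sdiff, Finset.mem_insert, Finset.mem_singleton, not_or]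
          at hamem hcmem
        obtain ⟨haLu, hax, habn, haα⟩ := hamem
        obtain ⟨hcLw, hcy, hcb, hca, hcβ⟩ := hcmem
        exact hglue a b c' hNu hNv hNw hxS hyS huv' hvw' huw hφ hφL haLu hbLv hcLw
          habn (fun e => hcb e.symm) (fun e => hca e.symm) hax hbx hby hcy
          (fun _ => Or.inr ⟨α, hαU, Ne.symm haα⟩) (fun _ => Or.inr ⟨β, hβU, Ne.symm hcβ⟩)
          (fun e => absurd e hxy)
      obtain ⟨b1, hb1', b2, hb2', h12⟩ := sd2_two hLv4 (φ x) (φ y)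
      have hb1c := hb1'
      have hb2c := hb2'
      simp only [Finset.mem_sdiff, Finset.mem_insert, Finset.mem_singleton, not_or]
        at hb1c hb2c
      obtain ⟨hb1Lv, hb1x, hb1y⟩ := hb1c
      obtain ⟨hb2Lv, hb2x, hb2y⟩ := hb2c
      by_cases hsucc : ∃ b ∈ L v \ {φ x, φ y}, ∃ a ∈ L u \ {φ x, b, α},
          (L w \ {φ y, b, a, β}).Nonempty
      · obtain ⟨b, hbB, a, ha, c', hc'⟩ := hsucc
        have hbc := hbB
        simp only [Finset.mem_sdiff, Finset.mem_insert, Finset.mem_singleton, not_or] at hbc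
        exact main b hbc.1 hbc.2.1 hbc.2.2 a ha c' hc'
      · push_neg at hsucc
        have force : ∀ b ∈ L v \ {φ x, φ y}, ∀ a ∈ L u \ {φ x, b, α},
            L w = {φ y, b, a, β} := by
          intro b hbB a ha
          have hempty := hsucc b hbB a ha
          exact Finset.eq_of_subset_of_card_le (Finset.sdiff_eq_empty_iff_subset.mp hempty)
            (by rw [hLw4]; exact cle4 _ _ _ _)
        have Auniq : ∀ b ∈ L v \ {φ x, φ y}, ∀ a ∈ L u \ {φ x, b, α},
            ∀ a' ∈ L u \ {φ x, b, α}, a = a' := by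
          intro b hbB a ha a' ha'
          have e1 := force b hbB a ha
          have e2 := force b hbB a' ha'
          have h4 := four_ne (by rw [← e1]; exact hLw4)
          have haw : a ∈ L w := by rw [e1]; simp
          rw [e2] at haw
          simp only [Finset.mem_insert, Finset.mem_singleton] at haw
          rcases haw with e | e | e | e
          · exact absurd e.symm h4.2.1
          · exact absurd e.symm h4.2.2.2.1
          · exact e
          · exact absurd e h4.2.2.2.2.2
        have eLu : ∀ b ∈ L v \ {φ x, φ y}, ∀ a ∈ L u \ {φ x, b, α},
            L u = {φ x, b, α, a} := by
          intro b hbB a ha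
          apply Finset.eq_of_subset_of_card_le
          · intro z hz
            simp only [Finset.mem_insert, Finset.mem_singleton]
            by_cases h1 : z = φ x
            · exact Or.inl h1
            by_cases h2 : z = b
            · exact Or.inr (Or.inl h2)
            by_cases h3 : z = α
            · exact Or.inr (Or.inr (Or.inl h3))
            refine Or.inr (Or.inr (Or.inr ?_))
            refine Auniq b hbB z ?_ a ha
            simp only [Finset.mem_sdiff, Finset.mem_insert, Finset.mem_singleton, not_or]
            exact ⟨hz, h1, h2, h3⟩
          · rw [hLu4]; exact cle4 _ _ _ _
        obtain ⟨a1, ha1⟩ := sd3_nonempty hLu4 (φ x) b1 α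
        obtain ⟨a2, ha2⟩ := sd3_nonempty hLu4 (φ x) b2 α
        have e1 := force b1 hb1' a1 ha1
        have e2 := force b2 hb2' a2 ha2
        have h41 := four_ne (by rw [← e1]; exact hLw4)
        have h42 := four_ne (by rw [← e2]; exact hLw4)
        have hb2a1 : b2 = a1 := by
          have hm : b2 ∈ L w := by rw [e2]; simp
          rw [e1] at hm
          simp only [Finset.mem_insert, Finset.mem_singleton] at hm
          rcases hm with e | e | e | e
          · exact absurd e hb2y
          · exact absurd e.symm h12
          · exact e
          · exact absurd e h42.2.2.2.2.1
        have hb1a2 : b1 = a2 := by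
          have hm : b1 ∈ L w := by rw [e1]; simp
          rw [e2] at hm
          simp only [Finset.mem_insert, Finset.mem_singleton] at hm
          rcases hm with e | e | e | e
          · exact absurd e hb1y
          · exact absurd e h12
          · exact e
          · exact absurd e h41.2.2.2.2.1
        have eLu1 := eLu b1 hb1' a1 ha1
        have hLv : L v = {φ x, φ y, b1, b2} := by
          apply Finset.eq_of_subset_of_card_le
          · intro z hz
            simp only [Finset.mem_insert, Finset.mem_singleton]
            by_cases h1 : z = φ x
            · exact Or.inl h1
            by_cases h2 : z = φ y
            · exact Or.inr (Or.inl h2)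
            have hzB : z ∈ L v \ {φ x, φ y} := by
              simp only [Finset.mem_sdiff, Finset.mem_insert, Finset.mem_singleton, not_or]
              exact ⟨hz, h1, h2⟩
            obtain ⟨az, haz⟩ := sd3_nonempty hLu4 (φ x) z α
            have eLuz := eLu z hzB az haz
            have h4z := four_ne (by rw [← eLuz]; exact hLu4)
            have hm : z ∈ L u := by rw [eLuz]; simp
            rw [eLu1] at hm
            simp only [Finset.mem_insert, Finset.mem_singleton] at hm
            rcases hm with e | e | e | e
            · exact absurd e h1
            · exact Or.inr (Or.inr (Or.inl e))
            · exact absurd e.symm h4z.2.2.2.1.symm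
            · exact Or.inr (Or.inr (Or.inr (e.trans hb2a1.symm)))
          · rw [hLv4]; exact cle4 _ _ _ _
        refine absurd ⟨α, β, b1, b2, hUx, hUy, ?_, hLv, ?_⟩ hstr
        · rw [eLu1, ← hb2a1]
          ext z
          simp only [Finset.mem_insert, Finset.mem_singleton]
          constructor <;> rintro (rfl | rfl | rfl | rfl) <;> simp
        · rw [e1, ← hb2a1]
          ext z
          simp only [Finset.mem_insert, Finset.mem_singleton]
          constructor <;> rintro (rfl | rfl | rfl | rfl) <;> simp
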